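/- Let F = x₁ + x₂ − 2 ∈ ℚ[x₁^{±1}, x₂^{±1}]. For every nonsingular matrix M = (m_{i,j}) ∈ ℤ^{2×2}, the Laurent polynomial F(x^M) = x₁^{m_{1,1}}x₂^{m_{1,2}} + x₁^{m_{2,1}}x₂^{m_{2,2}} − 2 is irreducible in ℚ[x₁^{±1}, x₂^{±1}]; moreover, for every nonzero a ∈ ℤ², the polynomial t − 1 divides F(t^{a₁}, t^{a₂}) = t^{a₁} + t^{a₂} − 2 in ℚ[t^{±1}]. -/

import Mathlib

open Polynomial

abbrev G2 : Type := Fin 2 → ℤ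
abbrev R2 : Type := AddMonoidAlgebra ℚ G2
abbrev MvP : Type := MvPolynomial (Fin 2) ℚ


/-- the additive automorphism of `ℤ²` given by a unimodular integer matrix -/
def mkE (A B C D ε : ℤ) (hd : A * D - B * C = ε) (hε : ε * ε = 1) : G2 ≃+ G2 where
  toFun w := ![A * w 0 + B * w 1, C * w 0 + D * w 1]
  invFun w := ![ε * (D * w 0 - B * w 1), ε * (A * w 1 - C * w 0)]
  left_inv w := by
    funext i
    fin_cases i <;>
      simp only [Fin.mk_zero, Fin.mk_one, Matrix.cons_val_zero, Matrix.cons_val_one, Matrix.head_cons, Fin.isValue] <;>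
      [linear_combination (norm := ring_nf) ε * w 0 * hd + w 0 * hε;
       linear_combination (norm := ring_nf) ε * w 1 * hd + w 1 * hε]
  right_inv w := by
    funext i
    fin_cases i <;>
      simp only [Fin.mk_zero, Fin.mk_one, Matrix.cons_val_zero, Matrix.cons_val_one, Matrix.head_cons, Fin.isValue] <;>
      [linear_combination (norm := ring_nf) ε * w 0 * hd + w 0 * hε;
       linear_combination (norm := ring_nf) ε * w 1 * hd + w 1 * hε]
  map_add' w v := by
    funext i
    fin_cases i <;>
      simp only [Fin.mk_zero, Fin.mk_one, Matrix.cons_val_zero, Matrix.cons_val_one, Matrix.head_cons, Fin.isValue,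
        Pi.add_apply] <;> ring

-- normal form machinery
theorem mkE_apply (A B C D ε : ℤ) (hd : A * D - B * C = ε) (hε : ε * ε = 1) (w : G2) :
    mkE A B C D ε hd hε w = ![A * w 0 + B * w 1, C * w 0 + D * w 1] := rfl

theorem vec_ext {x y x' y' : ℤ} (h0 : x = x') (h1 : y = y') : (![x, y] : G2) = ![x', y'] := by
  rw [h0, h1]

theorem mkE_vec (A B C D ε : ℤ) (hd : A * D - B * C = ε) (hε : ε * ε = 1) (x y : ℤ) :
    mkE A B C D ε hd hε ![x, y] = ![A * x + B * y, C * x + D * y] := by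
  rw [mkE_apply]
  exact vec_ext (by simp) (by simp)

theorem exists_normal_form (M : Matrix (Fin 2) (Fin 2) ℤ) (hM : M.det ≠ 0) :
    ∃ (e : G2 ≃+ G2) (gZ q1 p' : ℤ), 1 ≤ gZ ∧ 1 ≤ q1 ∧ p' ≤ -1 ∧
      e (fun j => M 0 j) = ![0, gZ] ∧ e (fun j => M 1 j) = ![q1, p'] := by
  have hdet : M 0 0 * M 1 1 - M 0 1 * M 1 0 ≠ 0 := by
    rw [Matrix.det_fin_two] at hM; exact hM
  obtain ⟨gZ, hgZ⟩ : ∃ g : ℤ, g = (Int.gcd (M 0 0) (M 0 1) : ℤ) := ⟨_, rfl⟩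
  have hg0 : gZ ≠ 0 := by
    rw [hgZ]
    simp only [ne_eq, Int.natCast_eq_zero, Int.gcd_eq_zero_iff]
    rintro ⟨h0, h1⟩
    exact hdet (by rw [h0, h1]; ring)
  have hg1 : 1 ≤ gZ := by
    have : (0:ℤ) ≤ gZ := hgZ ▸ Int.natCast_nonneg _
    omega
  obtain ⟨a', ha'⟩ : gZ ∣ M 0 0 := hgZ ▸ Int.gcd_dvd_left _ _
  obtain ⟨b', hb'⟩ : gZ ∣ M 0 1 := hgZ ▸ Int.gcd_dvd_right _ _
  obtain ⟨A0, B0, hBez⟩ : ∃ A0 B0 : ℤ, a' * A0 + b' * B0 = 1 := by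
    refine ⟨Int.gcdA (M 0 0) (M 0 1), Int.gcdB (M 0 0) (M 0 1), ?_⟩
    have h := Int.gcd_eq_gcd_ab (M 0 0) (M 0 1)
    rw [← hgZ] at h
    have h2 : gZ * (a' * Int.gcdA (M 0 0) (M 0 1) + b' * Int.gcdB (M 0 0) (M 0 1) - 1) = 0 := by
      linear_combination (-1) * h + (- Int.gcdA (M 0 0) (M 0 1)) * ha'
        + (- Int.gcdB (M 0 0) (M 0 1)) * hb'
    rcases mul_eq_zero.mp h2 with h3 | h3
    · exact absurd h3 hg0
    · linarith
  have hd1 : (-b') * B0 - a' * A0 = -1 := by linarith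
  set e1 : G2 ≃+ G2 := mkE (-b') a' A0 B0 (-1) hd1 (by norm_num) with he1
  obtain ⟨q0, hq0def⟩ : ∃ q : ℤ, q = -b' * M 1 0 + a' * M 1 1 := ⟨_, rfl⟩
  obtain ⟨p0, hp0def⟩ : ∃ p : ℤ, p = A0 * M 1 0 + B0 * M 1 1 := ⟨_, rfl⟩
  have hq0 : q0 ≠ 0 := by
    intro h
    apply hdet
    have h5 : gZ * q0 = M 0 0 * M 1 1 - M 0 1 * M 1 0 := by
      rw [hq0def]; linear_combination (-(M 1 1)) * ha' + (M 1 0) * hb'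
    rw [h, mul_zero] at h5
    linarith
  obtain ⟨σ, hσdef⟩ : ∃ s : ℤ, s = if q0 < 0 then -1 else 1 := ⟨_, rfl⟩
  have hσsq : σ * σ = 1 := by rw [hσdef]; split <;> norm_num
  have hσd : σ * 1 - 0 * 0 = σ := by ring
  set e2 : G2 ≃+ G2 := mkE σ 0 0 1 σ hσd hσsq with he2
  obtain ⟨q1, hq1def⟩ : ∃ q : ℤ, q = σ * q0 := ⟨_, rfl⟩
  have hq1 : 1 ≤ q1 := by
    rw [hq1def, hσdef]
    rcases lt_trichotomy q0 0 with h | h | h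
    · simp only [if_pos h]; omega
    · exact absurd h hq0
    · rw [if_neg (by omega)]; omega
  obtain ⟨k, hkdef⟩ : ∃ k : ℤ, k = -((p0.natAbs : ℤ) + 1) := ⟨_, rfl⟩
  set e3 : G2 ≃+ G2 := mkE 1 0 k 1 1 (by ring) (by norm_num) with he3
  obtain ⟨p', hp'def⟩ : ∃ p : ℤ, p = k * q1 + p0 := ⟨_, rfl⟩
  have hp' : p' ≤ -1 := by
    have h1 : p0 ≤ (p0.natAbs : ℤ) := Int.le_natAbs
    have h2 : ((p0.natAbs : ℤ) + 1) * 1 ≤ ((p0.natAbs : ℤ) + 1) * q1 :=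
      mul_le_mul_of_nonneg_left hq1 (by positivity)
    rw [hp'def, hkdef]
    nlinarith
  refine ⟨(e1.trans e2).trans e3, gZ, q1, p', hg1, hq1, hp', ?_, ?_⟩
  · show e3 (e2 (e1 _)) = _
    have h1 : e1 (fun j => M 0 j) = ![0, gZ] := by
      rw [he1, mkE_apply]
      exact vec_ext
        (by show -b' * M 0 0 + a' * M 0 1 = 0; linear_combination (-b') * ha' + a' * hb')
        (by show A0 * M 0 0 + B0 * M 0 1 = gZ;
            linear_combination A0 * ha' + B0 * hb' + gZ * hBez)
    rw [h1, he2, mkE_vec, he3, mkE_vec]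
    exact vec_ext (by ring) (by ring)
  · show e3 (e2 (e1 _)) = _
    have h1 : e1 (fun j => M 1 j) = ![q0, p0] := by
      rw [he1, mkE_apply]
      exact vec_ext (by rw [hq0def]) (by rw [hp0def])
    rw [h1, he2, mkE_vec, he3, mkE_vec]
    refine vec_ext ?_ ?_
    · rw [hq1def]; ring
    · rw [hp'def, hq1def]; ring
open AddMonoidAlgebra Polynomial


instance : IsDomain R2 := NoZeroDivisors.to_isDomain _

theorem sglmul (v w : G2) (c d : ℚ) :
    (AddMonoidAlgebra.single v c * AddMonoidAlgebra.single w d : R2)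
      = AddMonoidAlgebra.single (v + w) (c * d) :=
  AddMonoidAlgebra.single_mul_single _ _ _ _

theorem sgl_unit (v : G2) : IsUnit (AddMonoidAlgebra.single v (1:ℚ) : R2) := by
  refine isUnit_iff_exists.2 ⟨AddMonoidAlgebra.single (-v) 1, ?_, ?_⟩ <;>
    simp [sglmul, AddMonoidAlgebra.one_def]

noncomputable def ι2 : (Fin 2 →₀ ℕ) →+ G2 where
  toFun v := fun i => (v i : ℤ)
  map_zero' := by ext; simp
  map_add' := by intros; ext; simp

theorem ι2_inj : Function.Injective ι2 := by
  intro a b h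
  ext i
  have := congrFun h i
  simpa [ι2] using this

noncomputable def φ2 : MvP →+* R2 := AddMonoidAlgebra.mapDomainRingHom ℚ ι2

theorem φ2_inj : Function.Injective φ2 :=
  AddMonoidAlgebra.mapDomain_injective ι2_inj

theorem φ2_monomial (v : Fin 2 →₀ ℕ) (c : ℚ) :
    φ2 (MvPolynomial.monomial v c) = AddMonoidAlgebra.single (ι2 v) c := by
  show AddMonoidAlgebra.mapDomain ι2 (AddMonoidAlgebra.single v c) = _
  rw [AddMonoidAlgebra.mapDomain_single]

/-- turn a componentwise-nonneg vector into a `Fin 2 →₀ ℕ` -/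
noncomputable def toN (v : G2) : Fin 2 →₀ ℕ :=
  Finsupp.equivFunOnFinite.symm fun i => (v i).toNat

theorem ι2_toN {v : G2} (h : ∀ i, 0 ≤ v i) : ι2 (toN v) = v := by
  funext i
  simp [ι2, toN, Int.toNat_of_nonneg (h i)]

theorem sgl_eq_φ2 {v : G2} (h : ∀ i, 0 ≤ v i) (c : ℚ) :
    (AddMonoidAlgebra.single v c : R2) = φ2 (MvPolynomial.monomial (toN v) c) := by
  rw [φ2_monomial, ι2_toN h]

/-- every element of `R2` is a monomial times the image of a polynomial -/
theorem decomp (r : R2) : ∃ (w : G2) (Q : MvP), r = AddMonoidAlgebra.single w 1 * φ2 Q := by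
  induction r using AddMonoidAlgebra.induction with
  | zero => exact ⟨0, 0, by simp⟩
  | single_add a b f _ _ ih =>
    obtain ⟨w, Q, hQ⟩ := ih
    refine ⟨fun i => min (a i) (w i), MvPolynomial.monomial (toN (a - fun i => min (a i) (w i))) b
      + MvPolynomial.monomial (toN (w - fun i => min (a i) (w i))) 1 * Q, ?_⟩
    set w' : G2 := fun i => min (a i) (w i) with hw'
    have h1 : ∀ i, 0 ≤ (a - w') i := fun i => by simp [hw', Pi.sub_apply]
    have h2 : ∀ i, 0 ≤ (w - w') i := fun i => by simp [hw', Pi.sub_apply]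
    rw [map_add, map_mul, mul_add, ← sgl_eq_φ2 h1, ← sgl_eq_φ2 h2, ← mul_assoc, sglmul]
    congr 1
    · rw [show w' + (a - w') = a by abel, one_mul]
    · rw [sglmul, show w' + (w - w') = w by abel, one_mul, hQ]

theorem mon_as_pow (n : Fin 2 →₀ ℕ) :
    MvPolynomial.monomial n (1:ℚ) = MvPolynomial.X 0 ^ n 0 * MvPolynomial.X 1 ^ n 1 := by
  have hn : Finsupp.single (0 : Fin 2) (n 0) + Finsupp.single 1 (n 1) = n := by
    apply Finsupp.ext
    intro i
    fin_cases i <;> simp [Finsupp.single_apply]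
  rw [MvPolynomial.X_pow_eq_monomial, MvPolynomial.X_pow_eq_monomial,
    MvPolynomial.monomial_mul, one_mul, hn]

theorem sgl_mul_φ2_eq (w₁ w₂ : G2) (A B : MvP)
    (h : AddMonoidAlgebra.single w₁ 1 * φ2 A = AddMonoidAlgebra.single w₂ 1 * φ2 B)
    (δm δp : G2) (hm : ∀ i, 0 ≤ δm i) (hp : ∀ i, 0 ≤ δp i)
    (hδ : δm + w₁ = δp + w₂) :
    MvPolynomial.monomial (toN δm) 1 * B = MvPolynomial.monomial (toN δp) 1 * A := by
  apply φ2_inj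
  rw [map_mul, map_mul, ← sgl_eq_φ2 hm, ← sgl_eq_φ2 hp]
  calc AddMonoidAlgebra.single δm 1 * φ2 B
      = AddMonoidAlgebra.single (δm - w₂) 1 * (AddMonoidAlgebra.single w₂ 1 * φ2 B) := by
        rw [← mul_assoc, sglmul, one_mul, show δm - w₂ + w₂ = δm from by abel]
    _ = AddMonoidAlgebra.single (δm - w₂) 1 * (AddMonoidAlgebra.single w₁ 1 * φ2 A) := by
        rw [← h]
    _ = AddMonoidAlgebra.single δp 1 * φ2 A := by
        have hexp : δm - w₂ + w₁ = δp := by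
          funext i
          have h2 := congrFun hδ i
          simp only [Pi.add_apply, Pi.sub_apply] at h2 ⊢
          linarith
        rw [← mul_assoc, sglmul, one_mul, hexp]

theorem transfer (P : MvP) (hP : Prime P) (hX0 : ¬ P ∣ MvPolynomial.X 0)
    (hX1 : ¬ P ∣ MvPolynomial.X 1) (w : G2) (f : R2)
    (key : f = AddMonoidAlgebra.single w 1 * φ2 P) (hne : f ≠ 0) (hnu : ¬ IsUnit f) :
    Prime f := by
  refine ⟨hne, hnu, fun s t hst => ?_⟩
  obtain ⟨h, hh⟩ := hst
  obtain ⟨ws, S, hS⟩ := decomp s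
  obtain ⟨wt, T, hT⟩ := decomp t
  obtain ⟨wh, H, hH⟩ := decomp h
  have E0 : AddMonoidAlgebra.single (ws + wt) 1 * φ2 (S * T)
      = AddMonoidAlgebra.single (w + wh) 1 * φ2 (P * H) := by
    have hhh := hh
    rw [hS, hT, key, hH, mul_mul_mul_comm, mul_mul_mul_comm (AddMonoidAlgebra.single w 1),
      sglmul, sglmul, one_mul] at hhh
    rw [map_mul, map_mul]
    exact hhh
  set δm : G2 := fun i => max (w i + wh i - ws i - wt i) 0 with hδm
  set δp : G2 := fun i => max (ws i + wt i - w i - wh i) 0 with hδp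
  have E1 : MvPolynomial.monomial (toN δm) 1 * (P * H)
      = MvPolynomial.monomial (toN δp) 1 * (S * T) := by
    refine sgl_mul_φ2_eq _ _ _ _ E0 δm δp (fun i => le_max_right _ _)
      (fun i => le_max_right _ _) ?_
    funext i
    simp only [hδm, hδp, Pi.add_apply]
    omega
  have hPdvd : P ∣ S * T := by
    have h1 : P ∣ MvPolynomial.monomial (toN δp) 1 * (S * T) :=
      ⟨MvPolynomial.monomial (toN δm) 1 * H, by rw [← E1]; ring⟩
    rcases hP.dvd_or_dvd h1 with h2 | h2
    · exfalso
      rw [mon_as_pow] at h2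
      rcases hP.dvd_or_dvd h2 with h3 | h3
      · exact hX0 (hP.dvd_of_dvd_pow h3)
      · exact hX1 (hP.dvd_of_dvd_pow h3)
    · exact h2
  have lift : ∀ (wz : G2) (Z : MvP), P ∣ Z →
      f ∣ AddMonoidAlgebra.single wz 1 * φ2 Z := by
    rintro wz Z ⟨Z₂, rfl⟩
    refine ⟨AddMonoidAlgebra.single (wz - w) 1 * φ2 Z₂, ?_⟩
    calc AddMonoidAlgebra.single wz 1 * φ2 (P * Z₂)
        = AddMonoidAlgebra.single (w + (wz - w)) 1 * (φ2 P * φ2 Z₂) := by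
          rw [map_mul, show w + (wz - w) = wz from by abel]
      _ = f * (AddMonoidAlgebra.single (wz - w) 1 * φ2 Z₂) := by
          rw [key, mul_mul_mul_comm, sglmul, one_mul]
  rcases hP.dvd_or_dvd hPdvd with h2 | h2
  · exact Or.inl (hS ▸ lift ws S h2)
  · exact Or.inr (hT ▸ lift wt T h2)

noncomputable def E2 : MvP ≃ₐ[ℚ] (ℚ[X])[X] :=
  (MvPolynomial.finSuccEquiv ℚ 1).trans (Polynomial.mapAlgEquiv
    ((MvPolynomial.finSuccEquiv ℚ 0).trans
      (Polynomial.mapAlgEquiv (MvPolynomial.isEmptyAlgEquiv ℚ (Fin 0)))))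

theorem E2_X0 : E2 (MvPolynomial.X 0) = (X : (ℚ[X])[X]) := by
  simp [E2, MvPolynomial.finSuccEquiv_X_zero, Polynomial.mapAlgEquiv]

theorem E2_X1 : E2 (MvPolynomial.X 1) = (C X : (ℚ[X])[X]) := by
  have h1 : (1 : Fin 2) = Fin.succ 0 := rfl
  rw [E2, AlgEquiv.trans_apply, h1, MvPolynomial.finSuccEquiv_X_succ,
    Polynomial.coe_mapAlgEquiv, Polynomial.map_C]
  simp [AlgEquiv.trans_apply, MvPolynomial.finSuccEquiv_X_zero]

theorem E2_P (q gN m : ℕ) :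
    E2 (MvPolynomial.X 0 ^ q + MvPolynomial.X 1 ^ (gN + m)
        - MvPolynomial.C 2 * MvPolynomial.X 1 ^ m)
      = (X : (ℚ[X])[X]) ^ q + C ((X : ℚ[X]) ^ (gN + m) - C 2 * X ^ m) := by
  have hC : E2 (MvPolynomial.C 2) = C (C (2:ℚ)) := by
    have : (MvPolynomial.C 2 : MvP) = algebraMap ℚ MvP 2 := rfl
    rw [this, AlgEquiv.commutes]
    rfl
  rw [map_sub, map_add, map_pow, map_pow, map_mul, map_pow, E2_X0, E2_X1, hC]
  rw [map_sub, map_mul, map_pow]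
  ring_nf
  rw [← C_pow, ← C_pow, ← C_mul, ← C_mul, ← C_mul]
  ring_nf
open Polynomial

theorem eis_irred (q gN m : ℕ) (hq : 1 ≤ q) (hg : 1 ≤ gN) (hm : 1 ≤ m) :
    Irreducible ((X : (Polynomial ℚ)[X]) ^ q
      + C ((X : ℚ[X]) ^ (gN + m) - C 2 * X ^ m)) := by
  set ρ : ℚ[X] := (X : ℚ[X]) ^ (gN + m) - C 2 * X ^ m with hρ
  have hρfac : ρ = X ^ m * ((X : ℚ[X]) ^ gN - C 2) := by rw [hρ]; ring
  have hbase_ne : ((X : ℚ[X]) ^ gN - C 2) ≠ 0 := X_pow_sub_C_ne_zero (by omega) 2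
  have hbase_nu : ¬ IsUnit ((X : ℚ[X]) ^ gN - C 2) := by
    intro h
    have := natDegree_eq_zero_of_isUnit h
    rw [natDegree_X_pow_sub_C] at this
    omega
  obtain ⟨π, hπ, hπdvd⟩ := WfDvdMonoid.exists_irreducible_factor hbase_nu hbase_ne
  have hπp : Prime π := (UniqueFactorizationMonoid.irreducible_iff_prime).mp hπ
  have hπX : ¬ π ∣ (X : ℚ[X]) := by
    intro h
    have h1 : π ∣ (X : ℚ[X]) ^ gN := dvd_pow h (by omega)
    have h2 : π ∣ C (2:ℚ) := by simpa using dvd_sub h1 hπdvd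
    exact hπ.not_isUnit (isUnit_of_dvd_unit h2 (isUnit_C.mpr (by norm_num)))
  have hsq : ¬ (π * π ∣ ((X : ℚ[X]) ^ gN - C 2)) := by
    intro h
    exact hπ.not_isUnit (((separable_X_pow_sub_C (2:ℚ)
      (Nat.cast_ne_zero.mpr (by omega)) (by norm_num)).squarefree) π h)
  have hπρ : π ∣ ρ := hρfac ▸ Dvd.dvd.mul_left hπdvd _
  have hπ2ρ : ¬ (π * π ∣ ρ) := by
    rw [hρfac]
    rintro h
    obtain ⟨s, hs⟩ := hπdvd
    rw [hs] at h
    have h2 : π ∣ X ^ m * s := by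
      have hπ0 : π ≠ 0 := hπp.ne_zero
      have : π * (π * (X ^ m * s)) = π * π * (X ^ m * s) := by ring
      obtain ⟨t, ht⟩ := h
      refine (mul_dvd_mul_iff_left hπ0).mp ?_
      exact ⟨t, by linear_combination ht⟩
    rcases hπp.dvd_or_dvd h2 with h3 | h3
    · exact hπX (hπp.dvd_of_dvd_pow h3)
    · exact hsq (by rw [hs]; exact mul_dvd_mul_left π h3)
  have hprime : (Ideal.span {π}).IsPrime := (Ideal.span_singleton_prime hπp.ne_zero).mpr hπp
  have hmonic : (X ^ q + C ρ : (ℚ[X])[X]).Monic :=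
    monic_X_pow_add (lt_of_le_of_lt degree_C_le (by exact_mod_cast (by omega : 0 < q)))
  have hdeg : (X ^ q + C ρ : (ℚ[X])[X]).natDegree = q := natDegree_X_pow_add_C
  have hEis : (X ^ q + C ρ : (ℚ[X])[X]).IsEisensteinAt (Ideal.span {π}) := by
    constructor
    · rw [hmonic.leadingCoeff, Ideal.mem_span_singleton]
      exact fun h => hπ.not_isUnit (isUnit_of_dvd_one h)
    · intro n hn
      rw [hdeg] at hn
      rw [Polynomial.coeff_add, coeff_X_pow, if_neg (by omega), coeff_C, zero_add]
      split_ifs with h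
      · exact Ideal.mem_span_singleton.mpr hπρ
      · exact Ideal.zero_mem _
    · rw [Polynomial.coeff_add, coeff_X_pow, if_neg (by omega), coeff_C, if_pos rfl, zero_add,
        Ideal.span_singleton_pow, Ideal.mem_span_singleton]
      intro h
      rw [pow_two] at h
      exact hπ2ρ h
  exact hEis.irreducible hprime hmonic.isPrimitive (by omega)

theorem P_facts (q gN m : ℕ) (hq : 1 ≤ q) (hg : 1 ≤ gN) (hm : 1 ≤ m) :
    Prime (MvPolynomial.X 0 ^ q + MvPolynomial.X 1 ^ (gN + m)
        - MvPolynomial.C 2 * MvPolynomial.X 1 ^ m : MvP)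
    ∧ ¬ (MvPolynomial.X 0 ^ q + MvPolynomial.X 1 ^ (gN + m)
        - MvPolynomial.C 2 * MvPolynomial.X 1 ^ m : MvP) ∣ MvPolynomial.X 0
    ∧ ¬ (MvPolynomial.X 0 ^ q + MvPolynomial.X 1 ^ (gN + m)
        - MvPolynomial.C 2 * MvPolynomial.X 1 ^ m : MvP) ∣ MvPolynomial.X 1 := by
  set P : MvP := MvPolynomial.X 0 ^ q + MvPolynomial.X 1 ^ (gN + m)
      - MvPolynomial.C 2 * MvPolynomial.X 1 ^ m with hPdef
  have hEP : E2 P = (Polynomial.X : (Polynomial ℚ)[X]) ^ q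
      + Polynomial.C ((Polynomial.X : ℚ[X]) ^ (gN + m) - Polynomial.C 2 * Polynomial.X ^ m) :=
    E2_P q gN m
  have hirr : Irreducible P := by
    rw [← MulEquiv.irreducible_iff (E2 : MvP ≃ₐ[ℚ] (Polynomial ℚ)[X]), hEP]
    exact eis_irred q gN m hq hg hm
  have hρ_ne : ((Polynomial.X : ℚ[X]) ^ (gN + m) - Polynomial.C 2 * Polynomial.X ^ m) ≠ 0 := by
    have hfac : ((Polynomial.X : ℚ[X]) ^ (gN + m) - Polynomial.C 2 * Polynomial.X ^ m)
        = Polynomial.X ^ m * ((Polynomial.X : ℚ[X]) ^ gN - Polynomial.C 2) := by ring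
    rw [hfac]
    exact mul_ne_zero (pow_ne_zero _ Polynomial.X_ne_zero)
      (Polynomial.X_pow_sub_C_ne_zero (by omega) 2)
  have hdegEP : (E2 P).natDegree = q := by rw [hEP]; exact Polynomial.natDegree_X_pow_add_C
  refine ⟨(UniqueFactorizationMonoid.irreducible_iff_prime).mp hirr, ?_, ?_⟩
  · intro hdvd
    have h1 : E2 P ∣ E2 (MvPolynomial.X 0) := map_dvd _ hdvd
    rw [E2_X0] at h1
    have h2 : E2 P ∣ Polynomial.C ((Polynomial.X : ℚ[X]) ^ (gN + m)
        - Polynomial.C 2 * Polynomial.X ^ m) := by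
      have h3 : E2 P ∣ E2 P - Polynomial.X ^ q := dvd_sub dvd_rfl (dvd_pow h1 (by omega))
      rw [hEP, add_sub_cancel_left] at h3
      rw [hEP]
      exact h3
    have h4 := Polynomial.natDegree_le_of_dvd h2 (by
      rw [ne_eq, Polynomial.C_eq_zero]; exact hρ_ne)
    rw [hdegEP, Polynomial.natDegree_C] at h4
    omega
  · intro hdvd
    have h1 : E2 P ∣ E2 (MvPolynomial.X 1) := map_dvd _ hdvd
    rw [E2_X1] at h1
    have h4 := Polynomial.natDegree_le_of_dvd h1 (by
      simp only [ne_eq, Polynomial.C_eq_zero]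
      exact Polynomial.X_ne_zero)
    rw [hdegEP, Polynomial.natDegree_C] at h4
    omega

noncomputable def aug : R2 →ₐ[ℚ] ℚ := AddMonoidAlgebra.lift ℚ ℚ G2 1

theorem aug_single (v : G2) (c : ℚ) : aug (AddMonoidAlgebra.single v c) = c := by
  simp [aug, AddMonoidAlgebra.lift_single]

theorem part1 (M : Matrix (Fin 2) (Fin 2) ℤ) (hM : M.det ≠ 0) :
    Irreducible ((AddMonoidAlgebra.single (fun j => M 0 j) 1
        + AddMonoidAlgebra.single (fun j => M 1 j) 1
        - AddMonoidAlgebra.single 0 2 : AddMonoidAlgebra ℚ (Fin 2 → ℤ))) := by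
  obtain ⟨e, gZ, q1, p', hg1, hq1, hp', heu, hev⟩ := exists_normal_form M hM
  set Φ : R2 ≃ₐ[ℚ] R2 := AddMonoidAlgebra.domCongr ℚ ℚ e with hΦ
  rw [← MulEquiv.irreducible_iff (Φ : R2 ≃ₐ[ℚ] R2)]
  have hΦf : Φ (AddMonoidAlgebra.single (fun j => M 0 j) 1
        + AddMonoidAlgebra.single (fun j => M 1 j) 1
        - AddMonoidAlgebra.single 0 2)
      = AddMonoidAlgebra.single ![0, gZ] 1 + AddMonoidAlgebra.single ![q1, p'] 1
        - AddMonoidAlgebra.single 0 2 := by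
    rw [map_sub, map_add, hΦ]
    rw [AddMonoidAlgebra.domCongr_single, AddMonoidAlgebra.domCongr_single,
      AddMonoidAlgebra.domCongr_single, heu, hev, map_zero]
  rw [hΦf]
  set q : ℕ := q1.toNat with hqdef
  set gN : ℕ := gZ.toNat with hgNdef
  set m : ℕ := (-p').toNat with hmdef
  have hqc : (q : ℤ) = q1 := Int.toNat_of_nonneg (by omega)
  have hgc : (gN : ℤ) = gZ := Int.toNat_of_nonneg (by omega)
  have hmc : (m : ℤ) = -p' := Int.toNat_of_nonneg (by omega)
  set P : MvP := MvPolynomial.X 0 ^ q + MvPolynomial.X 1 ^ (gN + m)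
      - MvPolynomial.C 2 * MvPolynomial.X 1 ^ m with hPdef
  obtain ⟨hP, hX0, hX1⟩ := P_facts q gN m (by omega) (by omega) (by omega)
  set f₁ : R2 := AddMonoidAlgebra.single ![0, gZ] 1 + AddMonoidAlgebra.single ![q1, p'] 1
      - AddMonoidAlgebra.single 0 2 with hf₁
  have h0 : φ2 (MvPolynomial.X 0 ^ q : MvP)
      = AddMonoidAlgebra.single (ι2 (Finsupp.single 0 q)) 1 := by
    rw [MvPolynomial.X_pow_eq_monomial, φ2_monomial]
  have h1 : φ2 (MvPolynomial.X 1 ^ (gN + m) : MvP)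
      = AddMonoidAlgebra.single (ι2 (Finsupp.single 1 (gN + m))) 1 := by
    rw [MvPolynomial.X_pow_eq_monomial, φ2_monomial]
  have h2 : φ2 (MvPolynomial.C 2 * MvPolynomial.X 1 ^ m : MvP)
      = AddMonoidAlgebra.single (ι2 (Finsupp.single 1 m)) 2 := by
    rw [MvPolynomial.C_mul_X_pow_eq_monomial, φ2_monomial]
  have hv0 : ![(0:ℤ), p'] + ι2 (Finsupp.single 0 q) = ![q1, p'] := by
    funext i
    fin_cases i <;>
      simp [ι2, Finsupp.single_apply] <;> omega
  have hv1 : ![(0:ℤ), p'] + ι2 (Finsupp.single 1 (gN + m)) = ![0, gZ] := by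
    funext i
    fin_cases i <;>
      simp [ι2, Finsupp.single_apply] <;> push_cast <;> omega
  have hv2 : ![(0:ℤ), p'] + ι2 (Finsupp.single 1 m) = 0 := by
    funext i
    fin_cases i <;>
      simp [ι2, Finsupp.single_apply] <;> omega
  have key : f₁ = AddMonoidAlgebra.single ![(0:ℤ), p'] 1 * φ2 P := by
    rw [hPdef, map_sub, map_add, h0, h1, h2, mul_sub, mul_add, sglmul, sglmul, sglmul]
    simp only [one_mul]
    rw [hv0, hv1, hv2, hf₁]
    ring
  have hφ2P : φ2 P ≠ 0 := fun hzz => hP.ne_zero (φ2_inj (by rw [hzz, map_zero]))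
  have hne : f₁ ≠ 0 := by
    rw [key]
    exact fun hzz => hφ2P ((sgl_unit ![(0:ℤ), p']).mul_right_eq_zero.mp hzz)
  have hnu : ¬ IsUnit f₁ := by
    intro h
    have h2 : IsUnit (aug f₁) := h.map aug
    rw [hf₁, map_sub, map_add, aug_single, aug_single, aug_single] at h2
    norm_num at h2
  exact (transfer P hP hX0 hX1 _ f₁ key hne hnu).irreducible
open LaurentPolynomial
theorem Tdvd_nat (n : ℕ) : (T 1 - 1 : LaurentPolynomial ℚ) ∣ (T (n:ℤ) - 1) := by
  induction n with
  | zero => simp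
  | succ k ih =>
    have h : (T ((k:ℤ)+1) - 1 : LaurentPolynomial ℚ)
        = T 1 * (T (k:ℤ) - 1) + (T 1 - 1) := by
      rw [T_add]; ring
    rw [Nat.cast_succ, h]
    exact dvd_add (Dvd.dvd.mul_left ih _) dvd_rfl
theorem Tdvd (n : ℤ) : (T 1 - 1 : LaurentPolynomial ℚ) ∣ (T n - 1) := by
  rcases le_or_gt 0 n with h | h
  · lift n to ℕ using h; exact Tdvd_nat n
  · have h2 : (T n - 1 : LaurentPolynomial ℚ) = -T n * (T (-n) - 1) := by
      rw [mul_sub, neg_mul, ← T_add]; simp; ring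
    rw [h2]
    have : (0:ℤ) ≤ -n := by omega
    lift (-n) to ℕ using this with m hm
    exact (Tdvd_nat m).mul_left _
theorem part2 (a : Fin 2 → ℤ) :
    (LaurentPolynomial.T 1 - 1 : LaurentPolynomial ℚ) ∣
      (LaurentPolynomial.T (a 0) + LaurentPolynomial.T (a 1) - 2) := by
  have : (T (a 0) + T (a 1) - 2 : LaurentPolynomial ℚ)
      = (T (a 0) - 1) + (T (a 1) - 1) := by ring
  rw [this]
  exact dvd_add (Tdvd _) (Tdvd _)

/-- For `F = x₁ + x₂ − 2 ∈ ℚ[x₁^{±1}, x₂^{±1}]` and any nonsingular `M ∈ ℤ^{2×2}`, the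
pullback `F(x^M) = x^{M 0} + x^{M 1} − 2` is irreducible in the Laurent polynomial ring
`AddMonoidAlgebra ℚ (Fin 2 → ℤ)`; moreover, for every nonzero `a ∈ ℤ²`, `t − 1` divides
`t^{a₁} + t^{a₂} − 2` in `ℚ[t^{±1}]`. -/
theorem stmt_7 (M : Matrix (Fin 2) (Fin 2) ℤ) (hM : M.det ≠ 0)
    (a : Fin 2 → ℤ) (ha : a ≠ 0) :
    Irreducible ((AddMonoidAlgebra.single (fun j => M 0 j) 1
        + AddMonoidAlgebra.single (fun j => M 1 j) 1
        - AddMonoidAlgebra.single 0 2 : AddMonoidAlgebra ℚ (Fin 2 → ℤ))) ∧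
    (LaurentPolynomial.T 1 - 1 : LaurentPolynomial ℚ) ∣
      (LaurentPolynomial.T (a 0) + LaurentPolynomial.T (a 1) - 2) :=
  ⟨part1 M hM, part2 a⟩
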